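/- Discrete total energy conservation: under the semi-discrete scheme with ρ_i de_i/dt = f_i · v_i + L_i : T_i, f_i = ⟨div T⟩_i, L_i = ⟨∇* v⟩_i, constant masses M_i = |ω_i| ρ_i, and d|ω_i|/dt = |ω_i| Tr L_i, the total energy Σ_i |ω_i| ρ_i e_i is constant in time, as a consequence of the adjointness identity Σ_i |ω_i| ⟨div T⟩_i · v_i = -Σ_i |ω_i| T_i : ⟨∇* v⟩_i. -/

import Mathlib

open scoped RealInnerProductSpace

/-- Frobenius inner product of two `2×2` real matrices. -/
def frob (Amat Bmat : Matrix (Fin 2) (Fin 2) ℝ) : ℝ :=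
  ∑ k, ∑ l, Amat k l * Bmat k l

/-- Discrete total energy conservation: under the semi-discrete scheme with
`ρ_i de_i/dt = f_i·v_i + L_i : T_i`, constant masses `M_i = |ω_i| ρ_i`,
`d|ω_i|/dt = |ω_i| Tr L_i`, and the adjointness identity
`∑_i |ω_i| f_i·v_i = -∑_i |ω_i| T_i : L_i`, the total energy
`∑_i |ω_i| ρ_i e_i` is constant in time. -/
theorem discrete_energy_conservation {N : ℕ}
    (A ρ e : Fin N → ℝ → ℝ)
    (v f : Fin N → ℝ → EuclideanSpace ℝ (Fin 2))
    (T L : Fin N → ℝ → Matrix (Fin 2) (Fin 2) ℝ)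
    (M : Fin N → ℝ)
    (hApos : ∀ i t, 0 < A i t) (hρpos : ∀ i t, 0 < ρ i t)
    -- constant masses
    (hM : ∀ i t, A i t * ρ i t = M i)
    -- area evolution d|ω_i|/dt = |ω_i| Tr L_i
    (hA : ∀ i t, HasDerivAt (A i) (A i t * (Matrix.trace (L i t))) t)
    -- energy equation ρ_i de_i/dt = f_i·v_i + L_i : T_i
    (he : ∀ i t, HasDerivAt (e i)
      ((⟪f i t, v i t⟫ + frob (L i t) (T i t)) / ρ i t) t)
    -- adjointness (discrete integration by parts):
    (hibp : ∀ t, (∑ i, A i t * ⟪f i t, v i t⟫)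
              = -(∑ i, A i t * frob (T i t) (L i t))) :
    ∀ t, (∑ i, A i t * ρ i t * e i t) = ∑ i, A i 0 * ρ i 0 * e i 0 := by
  have key : ∀ t, (∑ i, A i t * ρ i t * e i t) = ∑ i, M i * e i t := by
    intro t; exact Finset.sum_congr rfl fun i _ => by rw [hM]
  have hder : ∀ t, HasDerivAt (fun t => ∑ i, M i * e i t) 0 t := by
    intro t
    have h : HasDerivAt (fun t => ∑ i, M i * e i t)
        (∑ i, M i * ((⟪f i t, v i t⟫ + frob (L i t) (T i t)) / ρ i t)) t :=
      HasDerivAt.fun_sum fun i _ => (he i t).const_mul (M i)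
    convert h using 1
    have : ∀ i : Fin N,
        M i * ((⟪f i t, v i t⟫ + frob (L i t) (T i t)) / ρ i t)
        = A i t * ⟪f i t, v i t⟫ + A i t * frob (T i t) (L i t) := by
      intro i
      rw [← hM i t]
      have hρ := (hρpos i t).ne'
      have hfc : frob (L i t) (T i t) = frob (T i t) (L i t) := by
        simp only [frob]; congr 1; ext k; congr 1; ext l; ring
      field_simp
      rw [hfc]
    rw [Finset.sum_congr rfl fun i _ => this i, Finset.sum_add_distrib,
      hibp t]
    ring
  intro t
  rw [key t, key 0]
  have hdiff : Differentiable ℝ (fun t => ∑ i, M i * e i t) :=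
    fun x => (hder x).differentiableAt
  exact is_const_of_deriv_eq_zero hdiff (fun x => (hder x).deriv) t 0
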